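/- Let h_0 > 0, λ* = (π/(2h_0))², A = D_v λ* + r_v(1−q), B = D_h λ* + d_h + γ_h, R* = (β_v β_h N_v*/N_h*)/(AB), and assume R* > 1, so that λ_0 = ((A+B) − sqrt((A+B)² + 4AB(R*−1)))/2 < 0 and δ_0 = (B − λ_0)/β_h > 0. Let ψ(x) = cos(π x/(2h_0)) and φ = δ_0 ψ. Then there exists δ_1 > 0 (for instance δ_1 = min(−λ_0 N_h*/β_v, −λ_0 N_h*/(β_h δ_0))) such that for every δ with 0 < δ ≤ δ_1 and every x ∈ (−h_0, h_0), the stationary pair (V̲, H̲) = (δ φ(x), δ ψ(x)) satisfies −D_v (δφ)''(x) ≤ β_v (N_v* − δφ(x)) δψ(x)/N_h* − r_v(1−q) δφ(x) and −D_h (δψ)''(x) ≤ β_h δφ(x) (N_h* − δψ(x))/N_h* − (d_h+γ_h) δψ(x); that is, (δφ, δψ) is a lower solution of the West Nile virus system on (−h_0, h_0). -/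

import Mathlib

lemma second_deriv_cos (c k x : ℝ) :
    deriv (deriv (fun y => c * Real.cos (k * y))) x = -(c * k ^ 2) * Real.cos (k * x) := by
  have hd : ∀ y : ℝ, HasDerivAt (fun z => c * Real.cos (k * z)) (-(c * k) * Real.sin (k * y)) y := by
    intro y
    have h1 : HasDerivAt (fun z : ℝ => k * z) k y := by
      simpa using (hasDerivAt_id y).const_mul k
    have h2 := (Real.hasDerivAt_cos (k * y)).comp y h1
    have h3 := h2.const_mul c
    convert h3 using 1
    exacts [rfl, rfl, rfl, by ring]
  have hd2 : ∀ y : ℝ, HasDerivAt (fun z => -(c * k) * Real.sin (k * z))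
      (-(c * k ^ 2) * Real.cos (k * y)) y := by
    intro y
    have h1 : HasDerivAt (fun z : ℝ => k * z) k y := by
      simpa using (hasDerivAt_id y).const_mul k
    have h2 := (Real.hasDerivAt_sin (k * y)).comp y h1
    have h3 := h2.const_mul (-(c * k))
    convert h3 using 1
    exacts [rfl, rfl, rfl, by ring]
  have he : deriv (fun z => c * Real.cos (k * z)) = fun y => -(c * k) * Real.sin (k * y) :=
    funext fun y => (hd y).deriv
  rw [he]
  exact (hd2 x).deriv

/-- When `R* > 1`, for all sufficiently small `δ > 0` the
stationary pair `(δφ, δψ)` is a lower solution of the West Nile virus system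
on `(-h₀, h₀)`. -/
theorem lower_solution_exists
    (βv βh rv dh γh Nv Nh q Dv Dh h0 : ℝ)
    (hβv : 0 < βv) (hβh : 0 < βh) (hrv : 0 < rv) (hdh : 0 < dh) (hγh : 0 < γh)
    (hNv : 0 < Nv) (hNh : 0 < Nh) (hq0 : 0 ≤ q) (hq1 : q < 1)
    (hDv : 0 < Dv) (hDh : 0 < Dh) (hh0 : 0 < h0)
    (lamStar A B Rstar lam0 δ0 : ℝ)
    (hlam : lamStar = (Real.pi / (2 * h0)) ^ 2)
    (hA : A = Dv * lamStar + rv * (1 - q))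
    (hB : B = Dh * lamStar + dh + γh)
    (hRstar : Rstar = (βv * βh * Nv / Nh) / (A * B))
    (hRgt1 : 1 < Rstar)
    (hlam0 : lam0 = ((A + B) - Real.sqrt ((A + B) ^ 2 + 4 * A * B * (Rstar - 1))) / 2)
    (hlam0neg : lam0 < 0)
    (hδ0 : δ0 = (B - lam0) / βh) (hδ0pos : 0 < δ0)
    (ψ φ : ℝ → ℝ)
    (hψ : ψ = fun x => Real.cos (Real.pi * x / (2 * h0)))
    (hφ : φ = fun x => δ0 * ψ x) :
    ∃ δ1 : ℝ, 0 < δ1 ∧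
      ∀ δ : ℝ, 0 < δ → δ ≤ δ1 → ∀ x ∈ Set.Ioo (-h0) h0,
        -Dv * deriv (deriv (fun y => δ * φ y)) x ≤
          βv * (Nv - δ * φ x) * (δ * ψ x) / Nh - rv * (1 - q) * (δ * φ x) ∧
        -Dh * deriv (deriv (fun y => δ * ψ y)) x ≤
          βh * (δ * φ x) * (Nh - δ * ψ x) / Nh - (dh + γh) * (δ * ψ x) := by
  have hπ := Real.pi_pos
  set k : ℝ := Real.pi / (2 * h0) with hk
  have hkpos : 0 < k := by rw [hk]; positivity
  have hk2 : k ^ 2 = lamStar := by rw [hk, hlam]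
  have hq' : 0 < 1 - q := by linarith
  have hlamStar : 0 < lamStar := by rw [hlam]; positivity
  have hApos : 0 < A := by rw [hA]; positivity
  have hBpos : 0 < B := by rw [hB]; positivity
  have hl0 : 0 < -lam0 := by linarith
  -- key algebraic identity
  have hS : 0 ≤ (A + B) ^ 2 + 4 * A * B * (Rstar - 1) := by
    nlinarith [mul_pos hApos hBpos, sq_nonneg (A + B)]
  have hs2 : ((A + B) - 2 * lam0) ^ 2 = (A + B) ^ 2 + 4 * A * B * (Rstar - 1) := by
    have h1 : Real.sqrt ((A + B) ^ 2 + 4 * A * B * (Rstar - 1)) = (A + B) - 2 * lam0 := by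
      rw [hlam0]; ring
    rw [← h1, Real.sq_sqrt hS]
  have hABR : A * B * Rstar * Nh = βv * βh * Nv := by
    rw [hRstar]; field_simp
  have hkey' : (A - lam0) * (B - lam0) * Nh = βv * βh * Nv := by
    linear_combination (Nh / 4) * hs2 + hABR
  have hβhδ0 : βh * δ0 = B - lam0 := by
    rw [hδ0]; field_simp
  have hβvNv : βv * Nv = (A - lam0) * δ0 * Nh := by
    have h2 : βv * Nv * βh = (A - lam0) * δ0 * Nh * βh := by
      linear_combination -hkey' - ((A - lam0) * Nh) * hβhδ0
    exact mul_right_cancel₀ (ne_of_gt hβh) h2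
  have hbd : 0 < βh * δ0 := mul_pos hβh hδ0pos
  refine ⟨min (-lam0 * Nh / βv) (-lam0 * Nh / (βh * δ0)),
    lt_min (div_pos (mul_pos hl0 hNh) hβv) (div_pos (mul_pos hl0 hNh) hbd), ?_⟩
  intro δ hδ hδle x hx
  obtain ⟨hx1, hx2⟩ := hx
  set s : ℝ := Real.cos (k * x) with hs
  have hkh : k * h0 = Real.pi / 2 := by rw [hk]; field_simp
  have hs1 : k * x < Real.pi / 2 := by
    rw [← hkh]; exact (mul_lt_mul_iff_right₀ hkpos).mpr hx2
  have hsneg : -(Real.pi / 2) < k * x := by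
    rw [← hkh]; have := (mul_lt_mul_iff_right₀ hkpos).mpr hx1; linarith
  have hspos : 0 < s := Real.cos_pos_of_mem_Ioo ⟨hsneg, hs1⟩
  have hsle : s ≤ 1 := Real.cos_le_one _
  have harg : ∀ y : ℝ, Real.pi * y / (2 * h0) = k * y := fun y => by rw [hk]; ring
  have hψx : ψ x = s := by simp only [hψ]; rw [harg]
  have hfψ : (fun y => δ * ψ y) = fun y => δ * Real.cos (k * y) := by
    funext y; simp only [hψ]; rw [harg]
  have hfφ : (fun y => δ * φ y) = fun y => (δ * δ0) * Real.cos (k * y) := by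
    funext y; simp only [hφ, hψ]; rw [harg]; ring
  have hd1 : deriv (deriv (fun y => δ * φ y)) x = -((δ * δ0) * k ^ 2) * s := by
    rw [hfφ]; exact second_deriv_cos (δ * δ0) k x
  have hd2 : deriv (deriv (fun y => δ * ψ y)) x = -(δ * k ^ 2) * s := by
    rw [hfψ]; exact second_deriv_cos δ k x
  -- key smallness bounds
  have hδa : δ * βv ≤ -lam0 * Nh :=
    (le_div_iff₀ hβv).mp (le_trans hδle (min_le_left _ _))
  have hδb : δ * (βh * δ0) ≤ -lam0 * Nh :=
    (le_div_iff₀ hbd).mp (le_trans hδle (min_le_right _ _))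
  have hδs : δ * s ≤ δ := by
    have := mul_le_mul_of_nonneg_left hsle hδ.le
    linarith
  have hkey1 : βv * (δ * s) ≤ -lam0 * Nh := by
    have := mul_le_mul_of_nonneg_left hδs hβv.le
    linarith
  have hkey2 : βh * δ0 * (δ * s) ≤ -lam0 * Nh := by
    have := mul_le_mul_of_nonneg_left hδs hbd.le
    linarith
  rw [hd1, hd2]
  simp only [hφ, hψx]
  constructor
  · have hm : δ0 * (δ * s) * (βv * (δ * s)) ≤ δ0 * (δ * s) * (-lam0 * Nh) :=
      mul_le_mul_of_nonneg_left hkey1 (mul_nonneg hδ0pos.le (mul_nonneg hδ.le hspos.le))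
    have goal1 : (-Dv * (-((δ * δ0) * k ^ 2) * s) + rv * (1 - q) * (δ * (δ0 * s))) * Nh ≤
        βv * (Nv - δ * (δ0 * s)) * (δ * s) := by
      have e2 : (-Dv * (-((δ * δ0) * k ^ 2) * s) + rv * (1 - q) * (δ * (δ0 * s))) * Nh
          = A * δ * δ0 * s * Nh := by
        rw [hA, ← hk2]; ring
      have e3 : βv * (Nv - δ * (δ0 * s)) * (δ * s)
          = A * δ * δ0 * s * Nh + (-lam0 * Nh) * (δ0 * (δ * s)) - δ0 * (δ * s) * (βv * (δ * s)) := by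
        linear_combination (δ * s) * hβvNv
      rw [e2, e3]
      linarith
    have := (le_div_iff₀ hNh).mpr goal1
    linarith
  · have hm : (δ * s) * (βh * δ0 * (δ * s)) ≤ (δ * s) * (-lam0 * Nh) :=
      mul_le_mul_of_nonneg_left hkey2 (mul_nonneg hδ.le hspos.le)
    have goal2 : (-Dh * (-(δ * k ^ 2) * s) + (dh + γh) * (δ * s)) * Nh ≤
        βh * (δ * (δ0 * s)) * (Nh - δ * s) := by
      have e2 : (-Dh * (-(δ * k ^ 2) * s) + (dh + γh) * (δ * s)) * Nh = B * δ * s * Nh := by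
        rw [hB, ← hk2]; ring
      have e3 : βh * (δ * (δ0 * s)) * (Nh - δ * s)
          = B * δ * s * Nh + (-lam0 * Nh) * (δ * s) - (δ * s) * (βh * δ0 * (δ * s)) := by
        linear_combination (δ * s * Nh) * hβhδ0
      rw [e2, e3]
      linarith
    have := (le_div_iff₀ hNh).mpr goal2
    linarith
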